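/- For every c > 0, the double integral ∫₀¹∫₀¹ exp(−c·(u + v − u·v)) du dv equals (e^{−c}/c) · ∫₀^c (eᵗ − 1)/t dt. -/
import Mathlib

open intervalIntegral Real

theorem matern_retained_twice (c : ℝ) (hc : 0 < c) :
    (∫ u in (0:ℝ)..1, ∫ v in (0:ℝ)..1, Real.exp (-c * (u + v - u * v))) =
      (Real.exp (-c) / c) * ∫ t in (0:ℝ)..c, (Real.exp t - 1) / t := by
  have hc0 : c ≠ 0 := ne_of_gt hc
  -- inner integral formula for u ≠ 1
  have hinner : ∀ u : ℝ, u ≠ 1 →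
      (∫ v in (0:ℝ)..1, Real.exp (-c * (u + v - u * v)))
        = (Real.exp (-c * u) - Real.exp (-c)) / (c * (1 - u)) := by
    intro u hu
    have hk : -c * (1 - u) ≠ 0 := by
      apply mul_ne_zero (by simpa using hc0)
      intro h; apply hu; linarith [sub_eq_zero.mp h]
    have h1 : ∀ v : ℝ, Real.exp (-c * (u + v - u * v))
        = Real.exp (-c * u) * Real.exp ((-c * (1 - u)) * v) := by
      intro v
      rw [← Real.exp_add]; ring_nf
    simp only [h1]
    rw [intervalIntegral.integral_const_mul,
      intervalIntegral.integral_comp_mul_left (fun x => Real.exp x) hk]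
    simp only [mul_zero, mul_one, integral_exp, smul_eq_mul, Real.exp_zero]
    have hne : c * (1 - u) ≠ 0 := by
      intro h; exact hk (by rw [neg_mul]; simpa using neg_eq_zero.mpr h)
    have he : Real.exp (-c * u) * Real.exp (-c * (1 - u)) = Real.exp (-c) := by
      rw [← Real.exp_add]; ring_nf
    rw [eq_div_iff hne, show ((-c*(1-u))⁻¹ = -(c*(1-u))⁻¹) from by rw [neg_mul, inv_neg]]
    field_simp
    ring_nf
    ring_nf at he
    linear_combination -he
  -- rewrite RHS
  have hRHS : (Real.exp (-c) / c) * (∫ t in (0:ℝ)..c, (Real.exp t - 1) / t)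
      = ∫ u in (0:ℝ)..1, (Real.exp (-c * u) - Real.exp (-c)) / (c * (1 - u)) := by
    have h2 : (∫ t in (0:ℝ)..c, (Real.exp t - 1) / t)
        = c * ∫ x in (0:ℝ)..1, (Real.exp (c * x) - 1) / (c * x) := by
      rw [intervalIntegral.integral_comp_mul_left (fun t => (Real.exp t - 1) / t) hc0]
      simp [smul_eq_mul, mul_div_assoc]
      field_simp
    have h3 : (∫ x in (0:ℝ)..1, (Real.exp (c * x) - 1) / (c * x))
        = ∫ u in (0:ℝ)..1, (Real.exp (c * (1 - u)) - 1) / (c * (1 - u)) := by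
      have := intervalIntegral.integral_comp_sub_left
        (fun x => (Real.exp (c * x) - 1) / (c * x)) 1 (a := 0) (b := 1)
      simp at this
      rw [← this]
    rw [h2, h3, ← mul_assoc, div_mul_cancel₀ _ hc0, ← intervalIntegral.integral_const_mul]
    apply intervalIntegral.integral_congr
    intro u _
    simp only
    rw [mul_div_assoc', mul_sub, ← Real.exp_add, mul_one]
    ring_nf
  rw [hRHS]
  apply intervalIntegral.integral_congr_ae
  have h1 : ∀ᵐ u : ℝ, u ≠ 1 := by
    rw [MeasureTheory.ae_iff]
    simp
  filter_upwards [h1] with u hu _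
  exact hinner u hu
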